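/- If a finite poset P is both ε-graded and μ-graded, then W(P,μ;t) = t^{(r(ε)-r(μ))/2} · W(P,ε;t). -/

import Mathlib

open Polynomial

variable {P : Type*}

/-- The ε-weight of a chain `x₀ ⋖ x₁ ⋖ ⋯ ⋖ xₙ`, recorded as a list:
the sum `Σ ε(x_{i-1}, x_i)` over consecutive pairs. -/
def chainWeight (ε : P → P → ℤ) (c : List P) : ℤ :=
  ((c.zip c.tail).map fun q => ε q.1 q.2).sum

/-- A (nonempty) saturated chain of the poset `P`, as a list of elements with
each member covered by the next. -/
def IsSatChain [PartialOrder P] (c : List P) : Prop :=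
  c ≠ [] ∧ c.Chain' (· ⋖ ·)

/-- A maximal chain: a saturated chain starting at a minimal element and
ending at a maximal element. -/
def IsMaxChainL [PartialOrder P] (c : List P) : Prop :=
  IsSatChain c ∧ (∀ x ∈ c.head?, IsMin x) ∧ (∀ x ∈ c.getLast?, IsMax x)

/-- A saturated chain starting at a minimal element of `P` and ending at `x`. -/
def IsSatChainFromMinTo [PartialOrder P] (x : P) (c : List P) : Prop :=
  IsSatChain c ∧ (∀ y ∈ c.head?, IsMin y) ∧ c.getLast? = some x

/-- `ε` takes only the values `1` and `-1` on covering relations. -/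
def IsSignLabeling [PartialOrder P] (ε : P → P → ℤ) : Prop :=
  ∀ x y : P, x ⋖ y → ε x y = 1 ∨ ε x y = -1

/-- `P` is `ε`-graded of rank `r`: every maximal chain has ε-weight `r`. -/
def IsEGraded [PartialOrder P] (ε : P → P → ℤ) (r : ℤ) : Prop :=
  ∀ c : List P, IsMaxChainL c → chainWeight ε c = r

/-- A `(P,ε)`-partition: an order-reversing map `σ : P → {1,2,…}` which is
strict on covering relations labeled `-1`. -/
def IsPPartition [PartialOrder P] (ε : P → P → ℤ) (σ : P → ℤ) : Prop :=
  (∀ x, 1 ≤ σ x) ∧ (∀ x y : P, x ≤ y → σ y ≤ σ x) ∧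
  (∀ x y : P, x ⋖ y → ε x y = -1 → σ y < σ x)

/-- `Ω(P,ε;n)`: the number of `(P,ε)`-partitions with largest part at most `n`. -/
noncomputable def OmegaCount [PartialOrder P] (ε : P → P → ℤ) (n : ℕ) : ℕ :=
  Nat.card {σ : P → ℤ // IsPPartition ε σ ∧ ∀ x, σ x ≤ (n : ℤ)}

/-! ### Auxiliary lemmas -/

lemma chainWeight_cons_cons (ε : P → P → ℤ) (a b : P) (t : List P) :
    chainWeight ε (a :: b :: t) = ε a b + chainWeight ε (b :: t) := by
  simp [chainWeight]

lemma chainWeight_append (ε : P → P → ℤ) :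
    ∀ (c : List P) (t : List P) (x : P), c.getLast? = some x →
    chainWeight ε (c ++ t) = chainWeight ε c + chainWeight ε (x :: t)
  | [], _, _, h => by simp at h
  | [a], t, x, h => by
      simp only [List.getLast?_singleton, Option.some.injEq] at h
      subst h
      simp [chainWeight]
  | a :: b :: c', t, x, h => by
      rw [List.getLast?_cons_cons] at h
      have ih := chainWeight_append ε (b :: c') t x h
      simp only [List.cons_append] at *
      rw [chainWeight_cons_cons, chainWeight_cons_cons, ih]
      ring

lemma chain'_glue [PartialOrder P] {c t : List P} {x : P} (hc : c.getLast? = some x)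
    (h1 : c.Chain' (· ⋖ ·)) (h2 : (x :: t).Chain' (· ⋖ ·)) : (c ++ t).Chain' (· ⋖ ·) := by
  refine List.isChain_append.mpr ?_
  refine ⟨h1, (List.isChain_cons.mp h2).2, ?_⟩
  intro a ha b hb
  rw [hc, Option.mem_some_iff] at ha
  subst ha
  exact (List.isChain_cons.mp h2).1 b hb

lemma head?_append_left {c : List P} (t : List P) (h : c ≠ []) :
    (c ++ t).head? = c.head? := by
  cases c with
  | nil => simp at h
  | cons a c' => simp

lemma reflTransGen_covBy_of_le [PartialOrder P] [Fintype P] {x y : P} (h : x ≤ y) :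
    Relation.ReflTransGen (· ⋖ ·) x y := by
  classical
  letI := Fintype.toLocallyFiniteOrder (α := P)
  exact le_iff_reflTransGen_covBy.mp h

lemma exists_le_isMax [PartialOrder P] [Finite P] (x : P) : ∃ y, x ≤ y ∧ IsMax y := by
  obtain ⟨y, hy, hmax⟩ := Finite.exists_le_maximal (p := fun _ => True) (a := x) trivial
  exact ⟨y, hy, fun z hz => hmax.2 trivial hz⟩

lemma exists_isMin_le [PartialOrder P] [Finite P] (x : P) : ∃ y, y ≤ x ∧ IsMin y := by
  obtain ⟨y, hy, hmin⟩ := exists_minimal_le_of_wellFoundedLT (fun _ => True) x trivial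
  exact ⟨y, hy, fun z hz => hmin.2 trivial hz⟩

/-- antitone from cover-antitone -/
lemma antitone_of_covers [PartialOrder P] [Fintype P] (f : P → ℤ)
    (h : ∀ x y : P, x ⋖ y → f y ≤ f x) : ∀ x y : P, x ≤ y → f y ≤ f x := by
  intro x y hxy
  have h' := reflTransGen_covBy_of_le hxy
  clear hxy
  induction h' with
  | refl => exact le_refl _
  | tail _ hbc ih => exact (h _ _ hbc).trans ih

/-- a saturated chain from x up to a maximal element -/
lemma exists_chain_up [PartialOrder P] [Fintype P] (x : P) :
    ∃ t : List P, (x :: t).Chain' (· ⋖ ·) ∧ ∀ y ∈ (x :: t).getLast?, IsMax y := by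
  obtain ⟨m, hxm, hm⟩ := exists_le_isMax x
  suffices h : ∀ y : P, Relation.ReflTransGen (· ⋖ ·) x y →
      ∃ t : List P, (x :: t).Chain' (· ⋖ ·) ∧ (x :: t).getLast? = some y by
    obtain ⟨t, ht, hl⟩ := h m (reflTransGen_covBy_of_le hxm)
    exact ⟨t, ht, by rw [hl]; rintro y ⟨rfl⟩; exact hm⟩
  intro y hy
  induction hy with
  | refl => exact ⟨[], List.isChain_singleton x, rfl⟩
  | @tail b c hab hbc ih =>
      obtain ⟨t, ht, hl⟩ := ih
      refine ⟨t ++ [c], ?_, ?_⟩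
      · rw [show x :: (t ++ [c]) = (x :: t) ++ [c] from rfl]
        exact chain'_glue hl ht (List.isChain_pair.mpr hbc)
      · rw [show x :: (t ++ [c]) = (x :: t) ++ [c] from rfl, List.getLast?_concat]

/-- a saturated chain from a minimal element up to x -/
lemma exists_chain_down [PartialOrder P] [Fintype P] (x : P) :
    ∃ c : List P, IsSatChainFromMinTo x c := by
  obtain ⟨m, hmx, hm⟩ := exists_isMin_le x
  suffices h : ∀ y : P, Relation.ReflTransGen (· ⋖ ·) m y →
      ∃ c : List P, c ≠ [] ∧ c.Chain' (· ⋖ ·) ∧ c.head? = some m ∧ c.getLast? = some y by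
    obtain ⟨c, hne, hch, hh, hl⟩ := h x (reflTransGen_covBy_of_le hmx)
    exact ⟨c, ⟨hne, hch⟩, by rw [hh]; rintro y ⟨rfl⟩; exact hm, hl⟩
  intro y hy
  induction hy with
  | refl => exact ⟨[m], by simp, List.isChain_singleton m, rfl, rfl⟩
  | @tail b z hab hbc ih =>
      obtain ⟨c, hne, hch, hh, hl⟩ := ih
      refine ⟨c ++ [z], by simp, chain'_glue hl hch (List.isChain_pair.mpr hbc), ?_, ?_⟩
      · rw [head?_append_left _ hne, hh]
      · rw [List.getLast?_concat]

/-- Well-definedness of the weight of chains from a minimal element to `x`. -/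
lemma weight_welldef [PartialOrder P] [Fintype P] {lab : P → P → ℤ} {r : ℤ}
    (hgr : IsEGraded lab r) {x : P} {c d : List P}
    (hc : IsSatChainFromMinTo x c) (hd : IsSatChainFromMinTo x d) :
    chainWeight lab c = chainWeight lab d := by
  obtain ⟨t, ht, hmax⟩ := exists_chain_up x
  have key : ∀ e : List P, IsSatChainFromMinTo x e →
      chainWeight lab e + chainWeight lab (x :: t) = r := by
    rintro e ⟨⟨hne, hch⟩, hmin, hlast⟩
    rw [← chainWeight_append lab e t x hlast]
    apply hgr
    refine ⟨⟨by simp [hne], chain'_glue hlast hch ht⟩, ?_, ?_⟩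
    · rw [head?_append_left _ hne]; exact hmin
    · cases t with
      | nil => rw [List.append_nil, hlast]; simpa using hmax
      | cons b t' =>
          intro y hy
          apply hmax
          rw [List.getLast?_append] at hy
          rw [List.getLast?_cons_cons]
          obtain ⟨z, hz⟩ : ∃ z, (b :: t').getLast? = some z :=
            ⟨(b :: t').getLast (by simp), List.getLast?_eq_getLast _⟩
          rw [hz]
          rw [hz] at hy
          simpa [Option.or] using hy
  have h1 := key c hc
  have h2 := key d hd
  omega

/-- the weight of `x` : weight of any (a chosen) saturated chain from a minimal element to x -/
noncomputable def wtFun [PartialOrder P] [Fintype P] (lab : P → P → ℤ) (x : P) : ℤ :=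
  chainWeight lab (Classical.choose (exists_chain_down x))

lemma wtFun_eq [PartialOrder P] [Fintype P] {lab : P → P → ℤ} {r : ℤ}
    (hgr : IsEGraded lab r) {x : P} {c : List P} (hc : IsSatChainFromMinTo x c) :
    wtFun lab x = chainWeight lab c :=
  weight_welldef hgr (Classical.choose_spec (exists_chain_down x)) hc

lemma wtFun_min [PartialOrder P] [Fintype P] {lab : P → P → ℤ} {r : ℤ}
    (hgr : IsEGraded lab r) {x : P} (hx : IsMin x) : wtFun lab x = 0 := by
  have : IsSatChainFromMinTo x [x] :=
    ⟨⟨by simp, List.isChain_singleton x⟩, by rintro y ⟨rfl⟩; exact hx, rfl⟩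
  rw [wtFun_eq hgr this]; rfl

lemma wtFun_max [PartialOrder P] [Fintype P] {lab : P → P → ℤ} {r : ℤ}
    (hgr : IsEGraded lab r) {x : P} (hx : IsMax x) : wtFun lab x = r := by
  obtain ⟨⟨hne, hch⟩, hmin, hlast⟩ := Classical.choose_spec (exists_chain_down (P := P) x)
  exact hgr _ ⟨⟨hne, hch⟩, hmin, by rw [hlast]; rintro y ⟨rfl⟩; exact hx⟩

lemma wtFun_covBy [PartialOrder P] [Fintype P] {lab : P → P → ℤ} {r : ℤ}
    (hgr : IsEGraded lab r) {x y : P} (hxy : x ⋖ y) :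
    wtFun lab y = wtFun lab x + lab x y := by
  obtain ⟨⟨hne, hch⟩, hmin, hlast⟩ := Classical.choose_spec (exists_chain_down (P := P) x)
  set c := Classical.choose (exists_chain_down (P := P) x)
  have hcy : IsSatChainFromMinTo y (c ++ [y]) := by
    refine ⟨⟨by simp, chain'_glue hlast hch (List.isChain_pair.mpr hxy)⟩, ?_, ?_⟩
    · rw [head?_append_left _ hne]; exact hmin
    · rw [List.getLast?_concat]
  rw [wtFun_eq hgr hcy, chainWeight_append lab c [y] x hlast]
  simp [chainWeight, wtFun]
  rfl

/-- the difference of weights is even -/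
lemma even_chainWeight_sub [PartialOrder P] {ε μ : P → P → ℤ}
    (hsε : IsSignLabeling ε) (hsμ : IsSignLabeling μ) :
    ∀ c : List P, c.Chain' (· ⋖ ·) → Even (chainWeight ε c - chainWeight μ c)
  | [], _ => by simp [chainWeight]
  | [a], _ => by simp [chainWeight]
  | a :: b :: c'', hch => by
      have hch := List.isChain_cons_cons.mp hch
      have h := even_chainWeight_sub hsε hsμ (b :: c'') hch.2
      have hab := hch.1
      rw [chainWeight_cons_cons, chainWeight_cons_cons]
      have h2 : Even (ε a b - μ a b) := by
        rcases hsε a b hab with h1 | h1 <;> rcases hsμ a b hab with h2 | h2 <;>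
          rw [h1, h2] <;> decide
      obtain ⟨u, hu⟩ := h2
      obtain ⟨v, hv⟩ := h
      exact ⟨u + v, by omega⟩

lemma even_wt_sub [PartialOrder P] [Fintype P] {ε μ : P → P → ℤ}
    (hsε : IsSignLabeling ε) (hsμ : IsSignLabeling μ) (x : P) :
    Even (wtFun ε x - wtFun μ x) := by
  obtain ⟨⟨hne, hch⟩, hmin, hlast⟩ := Classical.choose_spec (exists_chain_down (P := P) x)
  exact even_chainWeight_sub hsε hsμ _ hch

/-- The transfer lemma: shifting a `(P,μ)`-partition by `d` gives a `(P,ε)`-partition. -/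
lemma transfer [PartialOrder P] [Fintype P] {ε μ : P → P → ℤ}
    (hsε : IsSignLabeling ε) (hsμ : IsSignLabeling μ)
    (d : P → ℤ) (h1 : ∀ x y : P, x ⋖ y → 2 * (d y - d x) = ε x y - μ x y)
    (hdmax : ∀ x : P, IsMax x → d x = 0) (c : ℤ) (hdmin : ∀ x : P, IsMin x → d x = c)
    (σ : P → ℤ) (M : ℤ) (hσ : IsPPartition μ σ) (hbd : ∀ x, σ x ≤ M) :
    IsPPartition ε (fun x => σ x + d x) ∧ ∀ x, σ x + d x ≤ M + c := by
  obtain ⟨hpos, hmono, hstrict⟩ := hσ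
  have cover : ∀ x y : P, x ⋖ y → σ y + d y ≤ σ x + d x := by
    intro x y hxy
    have h2 := h1 x y hxy
    rcases hsε x y hxy with he | he <;> rcases hsμ x y hxy with hm | hm
    · have := hmono x y hxy.le; omega
    · have := hstrict x y hxy hm; omega
    · have := hmono x y hxy.le; omega
    · have := hstrict x y hxy hm; omega
  have anti : ∀ x y : P, x ≤ y → σ y + d y ≤ σ x + d x :=
    antitone_of_covers (fun x => σ x + d x) cover
  have strictcover : ∀ x y : P, x ⋖ y → ε x y = -1 → σ y + d y < σ x + d x := by
    intro x y hxy he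
    have h2 := h1 x y hxy
    rcases hsμ x y hxy with hm | hm
    · have := hmono x y hxy.le; omega
    · have := hstrict x y hxy hm; omega
  have pos : ∀ x : P, 1 ≤ σ x + d x := by
    intro x
    obtain ⟨y, hxy, hy⟩ := exists_le_isMax x
    have h3 := anti x y hxy
    have h4 := hpos y
    have h5 := hdmax y hy
    omega
  refine ⟨⟨pos, anti, strictcover⟩, ?_⟩
  intro x
  obtain ⟨z, hzx, hz⟩ := exists_isMin_le x
  have h3 := anti z x hzx
  have h4 := hbd z
  have h5 := hdmin z hz
  omega

lemma omega_shift [PartialOrder P] [Fintype P] [Nonempty P]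
    {ε μ : P → P → ℤ} (hsε : IsSignLabeling ε) (hsμ : IsSignLabeling μ)
    {rε rμ : ℤ} (hgrε : IsEGraded ε rε) (hgrμ : IsEGraded μ rμ)
    (k : ℕ) (hk : (2 * k : ℤ) = rε - rμ) :
    (∀ n : ℕ, OmegaCount μ (n + k + 1) = OmegaCount ε (n + 1)) ∧
    (∀ n : ℕ, (n : ℤ) + 1 ≤ k → OmegaCount μ (n + 1) = 0) := by
  classical
  -- the function d
  have heven := even_wt_sub hsε hsμ
  choose δ hδ using heven
  -- hδ : wtFun ε x - wtFun μ x = δ x + δ x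
  set d : P → ℤ := fun x => δ x - k with hd
  have h1 : ∀ x y : P, x ⋖ y → 2 * (d y - d x) = ε x y - μ x y := by
    intro x y hxy
    have hε := wtFun_covBy hgrε hxy
    have hμ := wtFun_covBy hgrμ hxy
    have e1 := hδ x
    have e2 := hδ y
    simp only [hd]
    omega
  have hdmax : ∀ x : P, IsMax x → d x = 0 := by
    intro x hx
    have e1 := hδ x
    have h2 := wtFun_max hgrε hx
    have h3 := wtFun_max hgrμ hx
    simp only [hd]
    omega
  have hdmin : ∀ x : P, IsMin x → d x = -(k : ℤ) := by
    intro x hx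
    have e1 := hδ x
    have h2 := wtFun_min hgrε hx
    have h3 := wtFun_min hgrμ hx
    simp only [hd]
    omega
  have h1' : ∀ x y : P, x ⋖ y → 2 * ((-d) y - (-d) x) = μ x y - ε x y := by
    intro x y hxy; have := h1 x y hxy; simp only [Pi.neg_apply]; omega
  have hdmax' : ∀ x : P, IsMax x → (-d) x = 0 := by
    intro x hx; simp [hdmax x hx]
  have hdmin' : ∀ x : P, IsMin x → (-d) x = (k : ℤ) := by
    intro x hx; simp [hdmin x hx]
  constructor
  · intro n
    apply Nat.card_congr
    refine
      { toFun := fun s => ⟨fun x => s.1 x + d x, ?_, ?_⟩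
        invFun := fun s => ⟨fun x => s.1 x + (-d) x, ?_, ?_⟩
        left_inv := ?_
        right_inv := ?_ }
    · exact (transfer hsε hsμ d h1 hdmax _ hdmin s.1 _ s.2.1 s.2.2).1
    · intro x
      have := (transfer hsε hsμ d h1 hdmax _ hdmin s.1 _ s.2.1 s.2.2).2 x
      push_cast at this ⊢
      omega
    · exact (transfer hsμ hsε (-d) h1' hdmax' _ hdmin' s.1 _ s.2.1 s.2.2).1
    · intro x
      have := (transfer hsμ hsε (-d) h1' hdmax' _ hdmin' s.1 _ s.2.1 s.2.2).2 x
      push_cast at this ⊢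
      simp only [Pi.neg_apply] at this ⊢
      omega
    · intro s; ext x; simp
    · intro s; ext x; simp
  · intro n hn
    rw [OmegaCount, Nat.card_eq_zero]
    left
    refine ⟨fun s => ?_⟩
    have ht := transfer hsε hsμ d h1 hdmax _ hdmin s.1 _ s.2.1 s.2.2
    obtain ⟨⟨hpos, _, _⟩, hbd⟩ := ht
    have x := Classical.arbitrary P
    have hp := hpos x
    have hb := hbd x
    beta_reduce at hp hb
    push_cast at hb
    omega

/-- if `P` is both `ε`-graded and `μ`-graded (WLOG `r(μ) ≤ r(ε)`),
then `W(P,μ;t) = t^((r(ε)-r(μ))/2) · W(P,ε;t)`. -/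
theorem W_polynomial_shift {P : Type*} [PartialOrder P] [Fintype P] [Nonempty P]
    (ε μ : P → P → ℤ) (hsignε : IsSignLabeling ε) (hsignμ : IsSignLabeling μ)
    (rε rμ : ℤ) (hgrε : IsEGraded ε rε) (hgrμ : IsEGraded μ rμ)
    (k : ℕ) (hk : (2 * k : ℤ) = rε - rμ)
    (Wε Wμ : Polynomial ℚ)
    (hWε : (Wε : PowerSeries ℚ) =
      PowerSeries.mk (fun n => (OmegaCount ε (n + 1) : ℚ)) *
        (1 - PowerSeries.X) ^ (Fintype.card P + 1))
    (hWμ : (Wμ : PowerSeries ℚ) =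
      PowerSeries.mk (fun n => (OmegaCount μ (n + 1) : ℚ)) *
        (1 - PowerSeries.X) ^ (Fintype.card P + 1)) :
    Wμ = X ^ k * Wε := by
  obtain ⟨hshift, hzero⟩ := omega_shift hsignε hsignμ hgrε hgrμ k hk
  have hmk : (PowerSeries.mk (fun n => (OmegaCount μ (n + 1) : ℚ))) =
      PowerSeries.X ^ k * PowerSeries.mk (fun n => (OmegaCount ε (n + 1) : ℚ)) := by
    ext n
    rw [PowerSeries.coeff_mk, PowerSeries.coeff_X_pow_mul']
    split_ifs with h
    · rw [PowerSeries.coeff_mk]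
      have h2 := hshift (n - k)
      rw [show n - k + k + 1 = n + 1 by omega] at h2
      rw [h2]
    · rw [hzero n (by push_cast; omega)]
      simp
  apply Polynomial.coe_inj.mp
  rw [hWμ, hmk, mul_assoc, ← hWε, Polynomial.coe_mul, Polynomial.coe_pow, Polynomial.coe_X]
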